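/- BPS equations in eight Euclidean dimensions (ν = 4/16): in Cl₈ let Γ* = Γ₁Γ₂⋯Γ₈ and Ω₁₂₃₄ = ¼(1 + Γ*)(1 + Γ₁₂₃₄). Then Ω₁₂₃₄ is an idempotent, and for every antisymmetric F : {1,…,8}² → ℝ one has X_F·Ω₁₂₃₄ = 0 if and only if: F₁₂ + F₄₃ = 0, F₁₃ + F₂₄ = 0, F₁₄ + F₃₂ = 0, F₅₆ + F₈₇ = 0, F₅₇ + F₆₈ = 0, F₅₈ + F₇₆ = 0, and F_{ab} = 0 for all a ∈ {1,2,3,4}, b ∈ {5,6,7,8}. -/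
import Mathlib


/-- The positive-definite quadratic form `Q(x) = x₁² + ⋯ + x_d²` on `ℝ^d`, `d = 8`. -/
noncomputable def Q8 : QuadraticForm ℝ (Fin 8 → ℝ) :=
  QuadraticMap.weightedSumSquares ℝ (fun _ : Fin 8 => (1 : ℝ))

/-- `Γ_a` (`a = 1,…,8`, indexed here by `Fin 8`): the image of the `a`-th
standard basis vector in `Cl_8`. -/
noncomputable def G8 (a : Fin 8) : CliffordAlgebra Q8 :=
  CliffordAlgebra.ι Q8 (Pi.single a 1)

/-- `X_F = ∑_{a,b} F_{ab} Γ_aΓ_b`. -/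
noncomputable def X8 (F : Fin 8 → Fin 8 → ℝ) : CliffordAlgebra Q8 :=
  ∑ a, ∑ b, F a b • (G8 a * G8 b)

/-- The chirality element `Γ* = Γ₁Γ₂⋯Γ₈` of `Cl₈`. -/
noncomputable def GStar8 : CliffordAlgebra Q8 :=
  G8 0 * G8 1 * G8 2 * G8 3 * G8 4 * G8 5 * G8 6 * G8 7

/-- The projector of the `ν = 4/16` BPS system in eight Euclidean dimensions:
`Ω₁₂₃₄ = ¼(1 + Γ*)(1 + Γ₁₂₃₄)`. -/
noncomputable def Omega8' : CliffordAlgebra Q8 :=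
  (1 / 4 : ℝ) • ((1 + GStar8) * (1 + G8 0 * G8 1 * G8 2 * G8 3))


set_option maxHeartbeats 1000000000
set_option maxRecDepth 100000

lemma Q8_apply (x : Fin 8 → ℝ) : Q8 x = ∑ i, x i * x i := by
  simp [Q8, QuadraticMap.weightedSumSquares_apply]

lemma Q8_single (a : Fin 8) : Q8 (Pi.single a 1) = 1 := by
  simp [Q8_apply, Pi.single_apply]

lemma G8_sq (a : Fin 8) : G8 a * G8 a = 1 := by
  rw [G8, CliffordAlgebra.ι_sq_scalar, Q8_single, map_one]

lemma Q8_ortho {a b : Fin 8} (h : a ≠ b) :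
    Q8.IsOrtho (Pi.single a 1) (Pi.single b 1) := by
  show Q8 _ = Q8 _ + Q8 _
  simp [Q8_apply, Pi.single_apply, add_mul, mul_add, Finset.sum_add_distrib,
    Finset.sum_ite_eq, Finset.sum_ite_eq', h, h.symm]

lemma G8_swap {a b : Fin 8} (h : b < a) : G8 a * G8 b = -(G8 b * G8 a) := by
  rw [G8, G8, CliffordAlgebra.ι_mul_ι_comm_of_isOrtho (Q8_ortho h.ne')]

lemma G8_sq' (a : Fin 8) (x : CliffordAlgebra Q8) : G8 a * (G8 a * x) = x := by
  rw [← mul_assoc, G8_sq, one_mul]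

lemma G8_swap' {a b : Fin 8} (h : b < a) (x : CliffordAlgebra Q8) :
    G8 a * (G8 b * x) = -(G8 b * (G8 a * x)) := by
  rw [← mul_assoc, G8_swap h, neg_mul, mul_assoc]

lemma omega_idem : Omega8' * Omega8' = Omega8' := by
  rw [Omega8', GStar8]
  simp only [smul_mul_assoc, mul_smul_comm, mul_add, add_mul, one_mul, mul_one, smul_smul]
  simp (config := { decide := true }) only [G8_sq, G8_sq', G8_swap, G8_swap', mul_assoc,
    mul_neg, neg_mul, neg_neg, mul_one, one_mul, smul_neg]
  module

noncomputable def lam : CliffordAlgebra Q8 →ₗ[ℝ] ℝ :=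
  (ExteriorAlgebra.algebraMapInv).toLinearMap ∘ₗ (CliffordAlgebra.equivExterior Q8).toLinearMap

lemma lam_one : lam (1 : CliffordAlgebra Q8) = 1 := by
  simp [lam, CliffordAlgebra.equivExterior, CliffordAlgebra.changeForm_one]

noncomputable def CL (j : Fin 8) : CliffordAlgebra Q8 →ₗ[ℝ] CliffordAlgebra Q8 :=
  CliffordAlgebra.contractLeft (LinearMap.proj j)

lemma CL_cons_eq {j a : Fin 8} (h : j = a) (x : CliffordAlgebra Q8) :
    CL j (G8 a * x) = x - G8 a * CL j x := by
  subst h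
  rw [CL, G8, CliffordAlgebra.contractLeft_ι_mul]
  simp [LinearMap.proj_apply, Pi.single_apply]

lemma CL_cons_ne {j a : Fin 8} (h : ¬ (j = a)) (x : CliffordAlgebra Q8) :
    CL j (G8 a * x) = -(G8 a * CL j x) := by
  rw [CL, G8, CliffordAlgebra.contractLeft_ι_mul]
  simp [LinearMap.proj_apply, Pi.single_apply, Ne.symm h]

lemma CL_one (j : Fin 8) : CL j (1 : CliffordAlgebra Q8) = 0 := by
  simp [CL, CliffordAlgebra.contractLeft_one]

lemma CL_single_eq {j a : Fin 8} (h : j = a) : CL j (G8 a) = 1 := by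
  subst h
  rw [CL, G8, CliffordAlgebra.contractLeft_ι]
  simp [LinearMap.proj_apply, Pi.single_apply]

lemma CL_single_ne {j a : Fin 8} (h : ¬ (j = a)) : CL j (G8 a) = 0 := by
  rw [CL, G8, CliffordAlgebra.contractLeft_ι]
  simp [LinearMap.proj_apply, Pi.single_apply, Ne.symm h]

lemma NF8 (F : Fin 8 → Fin 8 → ℝ) (hF : ∀ a b, F a b = -F b a) :
    X8 F * Omega8' =
      (F 0 1 / 2) • (G8 0 * (G8 1)) +
      (-F 0 1 / 2) • (G8 2 * (G8 3 * (G8 4 * (G8 5 * (G8 6 * (G8 7)))))) +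
      (-F 0 1 / 2) • (G8 2 * (G8 3)) +
      (F 0 1 / 2) • (G8 0 * (G8 1 * (G8 4 * (G8 5 * (G8 6 * (G8 7)))))) +
      (F 0 2 / 2) • (G8 0 * (G8 2)) +
      (F 0 2 / 2) • (G8 1 * (G8 3 * (G8 4 * (G8 5 * (G8 6 * (G8 7)))))) +
      (F 0 2 / 2) • (G8 1 * (G8 3)) +
      (F 0 2 / 2) • (G8 0 * (G8 2 * (G8 4 * (G8 5 * (G8 6 * (G8 7)))))) +
      (F 0 3 / 2) • (G8 0 * (G8 3)) +
      (-F 0 3 / 2) • (G8 1 * (G8 2 * (G8 4 * (G8 5 * (G8 6 * (G8 7)))))) +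
      (-F 0 3 / 2) • (G8 1 * (G8 2)) +
      (F 0 3 / 2) • (G8 0 * (G8 3 * (G8 4 * (G8 5 * (G8 6 * (G8 7)))))) +
      (F 0 4 / 2) • (G8 0 * (G8 4)) +
      (F 0 4 / 2) • (G8 1 * (G8 2 * (G8 3 * (G8 5 * (G8 6 * (G8 7)))))) +
      (F 0 4 / 2) • (G8 1 * (G8 2 * (G8 3 * (G8 4)))) +
      (F 0 4 / 2) • (G8 0 * (G8 5 * (G8 6 * (G8 7)))) +
      (F 0 5 / 2) • (G8 0 * (G8 5)) +
      (-F 0 5 / 2) • (G8 1 * (G8 2 * (G8 3 * (G8 4 * (G8 6 * (G8 7)))))) +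
      (F 0 5 / 2) • (G8 1 * (G8 2 * (G8 3 * (G8 5)))) +
      (-F 0 5 / 2) • (G8 0 * (G8 4 * (G8 6 * (G8 7)))) +
      (F 0 6 / 2) • (G8 0 * (G8 6)) +
      (F 0 6 / 2) • (G8 1 * (G8 2 * (G8 3 * (G8 4 * (G8 5 * (G8 7)))))) +
      (F 0 6 / 2) • (G8 1 * (G8 2 * (G8 3 * (G8 6)))) +
      (F 0 6 / 2) • (G8 0 * (G8 4 * (G8 5 * (G8 7)))) +
      (F 0 7 / 2) • (G8 0 * (G8 7)) +
      (-F 0 7 / 2) • (G8 1 * (G8 2 * (G8 3 * (G8 4 * (G8 5 * (G8 6)))))) +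
      (F 0 7 / 2) • (G8 1 * (G8 2 * (G8 3 * (G8 7)))) +
      (-F 0 7 / 2) • (G8 0 * (G8 4 * (G8 5 * (G8 6)))) +
      (F 1 2 / 2) • (G8 1 * (G8 2)) +
      (-F 1 2 / 2) • (G8 0 * (G8 3 * (G8 4 * (G8 5 * (G8 6 * (G8 7)))))) +
      (-F 1 2 / 2) • (G8 0 * (G8 3)) +
      (F 1 2 / 2) • (G8 1 * (G8 2 * (G8 4 * (G8 5 * (G8 6 * (G8 7)))))) +
      (F 1 3 / 2) • (G8 1 * (G8 3)) +
      (F 1 3 / 2) • (G8 0 * (G8 2 * (G8 4 * (G8 5 * (G8 6 * (G8 7)))))) +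
      (F 1 3 / 2) • (G8 0 * (G8 2)) +
      (F 1 3 / 2) • (G8 1 * (G8 3 * (G8 4 * (G8 5 * (G8 6 * (G8 7)))))) +
      (F 1 4 / 2) • (G8 1 * (G8 4)) +
      (-F 1 4 / 2) • (G8 0 * (G8 2 * (G8 3 * (G8 5 * (G8 6 * (G8 7)))))) +
      (-F 1 4 / 2) • (G8 0 * (G8 2 * (G8 3 * (G8 4)))) +
      (F 1 4 / 2) • (G8 1 * (G8 5 * (G8 6 * (G8 7)))) +
      (F 1 5 / 2) • (G8 1 * (G8 5)) +
      (F 1 5 / 2) • (G8 0 * (G8 2 * (G8 3 * (G8 4 * (G8 6 * (G8 7)))))) +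
      (-F 1 5 / 2) • (G8 0 * (G8 2 * (G8 3 * (G8 5)))) +
      (-F 1 5 / 2) • (G8 1 * (G8 4 * (G8 6 * (G8 7)))) +
      (F 1 6 / 2) • (G8 1 * (G8 6)) +
      (-F 1 6 / 2) • (G8 0 * (G8 2 * (G8 3 * (G8 4 * (G8 5 * (G8 7)))))) +
      (-F 1 6 / 2) • (G8 0 * (G8 2 * (G8 3 * (G8 6)))) +
      (F 1 6 / 2) • (G8 1 * (G8 4 * (G8 5 * (G8 7)))) +
      (F 1 7 / 2) • (G8 1 * (G8 7)) +
      (F 1 7 / 2) • (G8 0 * (G8 2 * (G8 3 * (G8 4 * (G8 5 * (G8 6)))))) +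
      (-F 1 7 / 2) • (G8 0 * (G8 2 * (G8 3 * (G8 7)))) +
      (-F 1 7 / 2) • (G8 1 * (G8 4 * (G8 5 * (G8 6)))) +
      (F 2 3 / 2) • (G8 2 * (G8 3)) +
      (-F 2 3 / 2) • (G8 0 * (G8 1 * (G8 4 * (G8 5 * (G8 6 * (G8 7)))))) +
      (-F 2 3 / 2) • (G8 0 * (G8 1)) +
      (F 2 3 / 2) • (G8 2 * (G8 3 * (G8 4 * (G8 5 * (G8 6 * (G8 7)))))) +
      (F 2 4 / 2) • (G8 2 * (G8 4)) +
      (F 2 4 / 2) • (G8 0 * (G8 1 * (G8 3 * (G8 5 * (G8 6 * (G8 7)))))) +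
      (F 2 4 / 2) • (G8 0 * (G8 1 * (G8 3 * (G8 4)))) +
      (F 2 4 / 2) • (G8 2 * (G8 5 * (G8 6 * (G8 7)))) +
      (F 2 5 / 2) • (G8 2 * (G8 5)) +
      (-F 2 5 / 2) • (G8 0 * (G8 1 * (G8 3 * (G8 4 * (G8 6 * (G8 7)))))) +
      (F 2 5 / 2) • (G8 0 * (G8 1 * (G8 3 * (G8 5)))) +
      (-F 2 5 / 2) • (G8 2 * (G8 4 * (G8 6 * (G8 7)))) +
      (F 2 6 / 2) • (G8 2 * (G8 6)) +
      (F 2 6 / 2) • (G8 0 * (G8 1 * (G8 3 * (G8 4 * (G8 5 * (G8 7)))))) +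
      (F 2 6 / 2) • (G8 0 * (G8 1 * (G8 3 * (G8 6)))) +
      (F 2 6 / 2) • (G8 2 * (G8 4 * (G8 5 * (G8 7)))) +
      (F 2 7 / 2) • (G8 2 * (G8 7)) +
      (-F 2 7 / 2) • (G8 0 * (G8 1 * (G8 3 * (G8 4 * (G8 5 * (G8 6)))))) +
      (F 2 7 / 2) • (G8 0 * (G8 1 * (G8 3 * (G8 7)))) +
      (-F 2 7 / 2) • (G8 2 * (G8 4 * (G8 5 * (G8 6)))) +
      (F 3 4 / 2) • (G8 3 * (G8 4)) +
      (-F 3 4 / 2) • (G8 0 * (G8 1 * (G8 2 * (G8 5 * (G8 6 * (G8 7)))))) +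
      (-F 3 4 / 2) • (G8 0 * (G8 1 * (G8 2 * (G8 4)))) +
      (F 3 4 / 2) • (G8 3 * (G8 5 * (G8 6 * (G8 7)))) +
      (F 3 5 / 2) • (G8 3 * (G8 5)) +
      (F 3 5 / 2) • (G8 0 * (G8 1 * (G8 2 * (G8 4 * (G8 6 * (G8 7)))))) +
      (-F 3 5 / 2) • (G8 0 * (G8 1 * (G8 2 * (G8 5)))) +
      (-F 3 5 / 2) • (G8 3 * (G8 4 * (G8 6 * (G8 7)))) +
      (F 3 6 / 2) • (G8 3 * (G8 6)) +
      (-F 3 6 / 2) • (G8 0 * (G8 1 * (G8 2 * (G8 4 * (G8 5 * (G8 7)))))) +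
      (-F 3 6 / 2) • (G8 0 * (G8 1 * (G8 2 * (G8 6)))) +
      (F 3 6 / 2) • (G8 3 * (G8 4 * (G8 5 * (G8 7)))) +
      (F 3 7 / 2) • (G8 3 * (G8 7)) +
      (F 3 7 / 2) • (G8 0 * (G8 1 * (G8 2 * (G8 4 * (G8 5 * (G8 6)))))) +
      (-F 3 7 / 2) • (G8 0 * (G8 1 * (G8 2 * (G8 7)))) +
      (-F 3 7 / 2) • (G8 3 * (G8 4 * (G8 5 * (G8 6)))) +
      (F 4 5 / 2) • (G8 4 * (G8 5)) +
      (-F 4 5 / 2) • (G8 0 * (G8 1 * (G8 2 * (G8 3 * (G8 6 * (G8 7)))))) +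
      (F 4 5 / 2) • (G8 0 * (G8 1 * (G8 2 * (G8 3 * (G8 4 * (G8 5)))))) +
      (-F 4 5 / 2) • (G8 6 * (G8 7)) +
      (F 4 6 / 2) • (G8 4 * (G8 6)) +
      (F 4 6 / 2) • (G8 0 * (G8 1 * (G8 2 * (G8 3 * (G8 5 * (G8 7)))))) +
      (F 4 6 / 2) • (G8 0 * (G8 1 * (G8 2 * (G8 3 * (G8 4 * (G8 6)))))) +
      (F 4 6 / 2) • (G8 5 * (G8 7)) +
      (F 4 7 / 2) • (G8 4 * (G8 7)) +
      (-F 4 7 / 2) • (G8 0 * (G8 1 * (G8 2 * (G8 3 * (G8 5 * (G8 6)))))) +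
      (F 4 7 / 2) • (G8 0 * (G8 1 * (G8 2 * (G8 3 * (G8 4 * (G8 7)))))) +
      (-F 4 7 / 2) • (G8 5 * (G8 6)) +
      (F 5 6 / 2) • (G8 5 * (G8 6)) +
      (-F 5 6 / 2) • (G8 0 * (G8 1 * (G8 2 * (G8 3 * (G8 4 * (G8 7)))))) +
      (F 5 6 / 2) • (G8 0 * (G8 1 * (G8 2 * (G8 3 * (G8 5 * (G8 6)))))) +
      (-F 5 6 / 2) • (G8 4 * (G8 7)) +
      (F 5 7 / 2) • (G8 5 * (G8 7)) +
      (F 5 7 / 2) • (G8 0 * (G8 1 * (G8 2 * (G8 3 * (G8 4 * (G8 6)))))) +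
      (F 5 7 / 2) • (G8 0 * (G8 1 * (G8 2 * (G8 3 * (G8 5 * (G8 7)))))) +
      (F 5 7 / 2) • (G8 4 * (G8 6)) +
      (F 6 7 / 2) • (G8 6 * (G8 7)) +
      (-F 6 7 / 2) • (G8 0 * (G8 1 * (G8 2 * (G8 3 * (G8 4 * (G8 5)))))) +
      (F 6 7 / 2) • (G8 0 * (G8 1 * (G8 2 * (G8 3 * (G8 6 * (G8 7)))))) +
      (-F 6 7 / 2) • (G8 4 * (G8 5)) := by
  have d0 : F 0 0 = 0 := by have := hF 0 0; linarith
  have d1 : F 1 1 = 0 := by have := hF 1 1; linarith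
  have d2 : F 2 2 = 0 := by have := hF 2 2; linarith
  have d3 : F 3 3 = 0 := by have := hF 3 3; linarith
  have d4 : F 4 4 = 0 := by have := hF 4 4; linarith
  have d5 : F 5 5 = 0 := by have := hF 5 5; linarith
  have d6 : F 6 6 = 0 := by have := hF 6 6; linarith
  have d7 : F 7 7 = 0 := by have := hF 7 7; linarith
  have s10 : F 1 0 = -F 0 1 := hF 1 0
  have s20 : F 2 0 = -F 0 2 := hF 2 0
  have s21 : F 2 1 = -F 1 2 := hF 2 1
  have s30 : F 3 0 = -F 0 3 := hF 3 0
  have s31 : F 3 1 = -F 1 3 := hF 3 1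
  have s32 : F 3 2 = -F 2 3 := hF 3 2
  have s40 : F 4 0 = -F 0 4 := hF 4 0
  have s41 : F 4 1 = -F 1 4 := hF 4 1
  have s42 : F 4 2 = -F 2 4 := hF 4 2
  have s43 : F 4 3 = -F 3 4 := hF 4 3
  have s50 : F 5 0 = -F 0 5 := hF 5 0
  have s51 : F 5 1 = -F 1 5 := hF 5 1
  have s52 : F 5 2 = -F 2 5 := hF 5 2
  have s53 : F 5 3 = -F 3 5 := hF 5 3
  have s54 : F 5 4 = -F 4 5 := hF 5 4
  have s60 : F 6 0 = -F 0 6 := hF 6 0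
  have s61 : F 6 1 = -F 1 6 := hF 6 1
  have s62 : F 6 2 = -F 2 6 := hF 6 2
  have s63 : F 6 3 = -F 3 6 := hF 6 3
  have s64 : F 6 4 = -F 4 6 := hF 6 4
  have s65 : F 6 5 = -F 5 6 := hF 6 5
  have s70 : F 7 0 = -F 0 7 := hF 7 0
  have s71 : F 7 1 = -F 1 7 := hF 7 1
  have s72 : F 7 2 = -F 2 7 := hF 7 2
  have s73 : F 7 3 = -F 3 7 := hF 7 3
  have s74 : F 7 4 = -F 4 7 := hF 7 4
  have s75 : F 7 5 = -F 5 7 := hF 7 5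
  have s76 : F 7 6 = -F 6 7 := hF 7 6
  rw [X8, Omega8', GStar8]
  simp only [Fin.sum_univ_eight]
  simp only [d0, d1, d2, d3, d4, d5, d6, d7, s10, s20, s21, s30, s31, s32, s40, s41, s42, s43, s50, s51, s52, s53, s54, s60, s61, s62, s63, s64, s65, s70, s71, s72, s73, s74, s75, s76]
  simp only [smul_mul_assoc, mul_smul_comm, mul_add, add_mul, one_mul, mul_one, smul_smul,
    neg_smul, smul_neg, neg_mul, mul_neg, zero_smul, add_zero, zero_add, neg_neg, smul_add]
  simp (config := { decide := true }) only [G8_sq, G8_sq', G8_swap, G8_swap', mul_assoc,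
    mul_neg, neg_mul, neg_neg, mul_one, one_mul, smul_neg]
  module

/-- BPS equations in eight Euclidean dimensions (`ν = 4/16`): `Ω₁₂₃₄` is an
idempotent, and for antisymmetric `F` one has `X_F·Ω₁₂₃₄ = 0` iff
`F₁₂+F₄₃ = 0`, `F₁₃+F₂₄ = 0`, `F₁₄+F₃₂ = 0`, `F₅₆+F₈₇ = 0`, `F₅₇+F₆₈ = 0`,
`F₅₈+F₇₆ = 0`, and `F_{ab} = 0` for `a ∈ {1,2,3,4}`, `b ∈ {5,6,7,8}`
(indices shifted down by one since `Fin 8` starts at `0`). -/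
theorem bps_eight_dimensions_four_sixteenth :
    Omega8' * Omega8' = Omega8' ∧
    ∀ F : Fin 8 → Fin 8 → ℝ, (∀ a b, F a b = -F b a) →
      (X8 F * Omega8' = 0 ↔
        (F 0 1 + F 3 2 = 0 ∧
         F 0 2 + F 1 3 = 0 ∧
         F 0 3 + F 2 1 = 0 ∧
         F 4 5 + F 7 6 = 0 ∧
         F 4 6 + F 5 7 = 0 ∧
         F 4 7 + F 6 5 = 0 ∧
         (∀ a b : Fin 8, a.val < 4 → 4 ≤ b.val → F a b = 0))) := by
  refine ⟨omega_idem, ?_⟩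
  intro F hF
  constructor
  · intro h
    have h0 := (NF8 F hF).symm.trans h
    have e0 := congrArg (fun x => lam (CL 7 (CL 6 (CL 5 (CL 4 (CL 3 (CL 2 x))))))) h0
    simp (config := { decide := true }) only [map_add, map_sub, map_neg, map_smul, map_zero,
      CL_cons_eq, CL_cons_ne, CL_one, CL_single_eq, CL_single_ne,
      zero_smul, one_smul, smul_zero, mul_zero, zero_mul, sub_zero, zero_sub, neg_zero, add_zero,
      zero_add, neg_neg, mul_one, lam_one, smul_eq_mul, smul_neg, neg_smul] at e0
    have e1 := congrArg (fun x => lam (CL 7 (CL 6 (CL 5 (CL 4 (CL 3 (CL 1 x))))))) h0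
    simp (config := { decide := true }) only [map_add, map_sub, map_neg, map_smul, map_zero,
      CL_cons_eq, CL_cons_ne, CL_one, CL_single_eq, CL_single_ne,
      zero_smul, one_smul, smul_zero, mul_zero, zero_mul, sub_zero, zero_sub, neg_zero, add_zero,
      zero_add, neg_neg, mul_one, lam_one, smul_eq_mul, smul_neg, neg_smul] at e1
    have e2 := congrArg (fun x => lam (CL 7 (CL 6 (CL 5 (CL 4 (CL 2 (CL 1 x))))))) h0
    simp (config := { decide := true }) only [map_add, map_sub, map_neg, map_smul, map_zero,
      CL_cons_eq, CL_cons_ne, CL_one, CL_single_eq, CL_single_ne,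
      zero_smul, one_smul, smul_zero, mul_zero, zero_mul, sub_zero, zero_sub, neg_zero, add_zero,
      zero_add, neg_neg, mul_one, lam_one, smul_eq_mul, smul_neg, neg_smul] at e2
    have e3 := congrArg (fun x => lam (CL 7 (CL 6 (CL 3 (CL 2 (CL 1 (CL 0 x))))))) h0
    simp (config := { decide := true }) only [map_add, map_sub, map_neg, map_smul, map_zero,
      CL_cons_eq, CL_cons_ne, CL_one, CL_single_eq, CL_single_ne,
      zero_smul, one_smul, smul_zero, mul_zero, zero_mul, sub_zero, zero_sub, neg_zero, add_zero,
      zero_add, neg_neg, mul_one, lam_one, smul_eq_mul, smul_neg, neg_smul] at e3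
    have e4 := congrArg (fun x => lam (CL 7 (CL 5 (CL 3 (CL 2 (CL 1 (CL 0 x))))))) h0
    simp (config := { decide := true }) only [map_add, map_sub, map_neg, map_smul, map_zero,
      CL_cons_eq, CL_cons_ne, CL_one, CL_single_eq, CL_single_ne,
      zero_smul, one_smul, smul_zero, mul_zero, zero_mul, sub_zero, zero_sub, neg_zero, add_zero,
      zero_add, neg_neg, mul_one, lam_one, smul_eq_mul, smul_neg, neg_smul] at e4
    have e5 := congrArg (fun x => lam (CL 6 (CL 5 (CL 3 (CL 2 (CL 1 (CL 0 x))))))) h0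
    simp (config := { decide := true }) only [map_add, map_sub, map_neg, map_smul, map_zero,
      CL_cons_eq, CL_cons_ne, CL_one, CL_single_eq, CL_single_ne,
      zero_smul, one_smul, smul_zero, mul_zero, zero_mul, sub_zero, zero_sub, neg_zero, add_zero,
      zero_add, neg_neg, mul_one, lam_one, smul_eq_mul, smul_neg, neg_smul] at e5
    have e6 := congrArg (fun x => lam (CL 7 (CL 6 (CL 5 (CL 3 (CL 2 (CL 1 x))))))) h0
    simp (config := { decide := true }) only [map_add, map_sub, map_neg, map_smul, map_zero,
      CL_cons_eq, CL_cons_ne, CL_one, CL_single_eq, CL_single_ne,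
      zero_smul, one_smul, smul_zero, mul_zero, zero_mul, sub_zero, zero_sub, neg_zero, add_zero,
      zero_add, neg_neg, mul_one, lam_one, smul_eq_mul, smul_neg, neg_smul] at e6
    have e7 := congrArg (fun x => lam (CL 7 (CL 6 (CL 4 (CL 3 (CL 2 (CL 1 x))))))) h0
    simp (config := { decide := true }) only [map_add, map_sub, map_neg, map_smul, map_zero,
      CL_cons_eq, CL_cons_ne, CL_one, CL_single_eq, CL_single_ne,
      zero_smul, one_smul, smul_zero, mul_zero, zero_mul, sub_zero, zero_sub, neg_zero, add_zero,
      zero_add, neg_neg, mul_one, lam_one, smul_eq_mul, smul_neg, neg_smul] at e7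
    have e8 := congrArg (fun x => lam (CL 7 (CL 5 (CL 4 (CL 3 (CL 2 (CL 1 x))))))) h0
    simp (config := { decide := true }) only [map_add, map_sub, map_neg, map_smul, map_zero,
      CL_cons_eq, CL_cons_ne, CL_one, CL_single_eq, CL_single_ne,
      zero_smul, one_smul, smul_zero, mul_zero, zero_mul, sub_zero, zero_sub, neg_zero, add_zero,
      zero_add, neg_neg, mul_one, lam_one, smul_eq_mul, smul_neg, neg_smul] at e8
    have e9 := congrArg (fun x => lam (CL 6 (CL 5 (CL 4 (CL 3 (CL 2 (CL 1 x))))))) h0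
    simp (config := { decide := true }) only [map_add, map_sub, map_neg, map_smul, map_zero,
      CL_cons_eq, CL_cons_ne, CL_one, CL_single_eq, CL_single_ne,
      zero_smul, one_smul, smul_zero, mul_zero, zero_mul, sub_zero, zero_sub, neg_zero, add_zero,
      zero_add, neg_neg, mul_one, lam_one, smul_eq_mul, smul_neg, neg_smul] at e9
    have e10 := congrArg (fun x => lam (CL 7 (CL 6 (CL 5 (CL 3 (CL 2 (CL 0 x))))))) h0
    simp (config := { decide := true }) only [map_add, map_sub, map_neg, map_smul, map_zero,
      CL_cons_eq, CL_cons_ne, CL_one, CL_single_eq, CL_single_ne,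
      zero_smul, one_smul, smul_zero, mul_zero, zero_mul, sub_zero, zero_sub, neg_zero, add_zero,
      zero_add, neg_neg, mul_one, lam_one, smul_eq_mul, smul_neg, neg_smul] at e10
    have e11 := congrArg (fun x => lam (CL 7 (CL 6 (CL 4 (CL 3 (CL 2 (CL 0 x))))))) h0
    simp (config := { decide := true }) only [map_add, map_sub, map_neg, map_smul, map_zero,
      CL_cons_eq, CL_cons_ne, CL_one, CL_single_eq, CL_single_ne,
      zero_smul, one_smul, smul_zero, mul_zero, zero_mul, sub_zero, zero_sub, neg_zero, add_zero,
      zero_add, neg_neg, mul_one, lam_one, smul_eq_mul, smul_neg, neg_smul] at e11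
    have e12 := congrArg (fun x => lam (CL 7 (CL 5 (CL 4 (CL 3 (CL 2 (CL 0 x))))))) h0
    simp (config := { decide := true }) only [map_add, map_sub, map_neg, map_smul, map_zero,
      CL_cons_eq, CL_cons_ne, CL_one, CL_single_eq, CL_single_ne,
      zero_smul, one_smul, smul_zero, mul_zero, zero_mul, sub_zero, zero_sub, neg_zero, add_zero,
      zero_add, neg_neg, mul_one, lam_one, smul_eq_mul, smul_neg, neg_smul] at e12
    have e13 := congrArg (fun x => lam (CL 6 (CL 5 (CL 4 (CL 3 (CL 2 (CL 0 x))))))) h0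
    simp (config := { decide := true }) only [map_add, map_sub, map_neg, map_smul, map_zero,
      CL_cons_eq, CL_cons_ne, CL_one, CL_single_eq, CL_single_ne,
      zero_smul, one_smul, smul_zero, mul_zero, zero_mul, sub_zero, zero_sub, neg_zero, add_zero,
      zero_add, neg_neg, mul_one, lam_one, smul_eq_mul, smul_neg, neg_smul] at e13
    have e14 := congrArg (fun x => lam (CL 7 (CL 6 (CL 5 (CL 3 (CL 1 (CL 0 x))))))) h0
    simp (config := { decide := true }) only [map_add, map_sub, map_neg, map_smul, map_zero,
      CL_cons_eq, CL_cons_ne, CL_one, CL_single_eq, CL_single_ne,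
      zero_smul, one_smul, smul_zero, mul_zero, zero_mul, sub_zero, zero_sub, neg_zero, add_zero,
      zero_add, neg_neg, mul_one, lam_one, smul_eq_mul, smul_neg, neg_smul] at e14
    have e15 := congrArg (fun x => lam (CL 7 (CL 6 (CL 4 (CL 3 (CL 1 (CL 0 x))))))) h0
    simp (config := { decide := true }) only [map_add, map_sub, map_neg, map_smul, map_zero,
      CL_cons_eq, CL_cons_ne, CL_one, CL_single_eq, CL_single_ne,
      zero_smul, one_smul, smul_zero, mul_zero, zero_mul, sub_zero, zero_sub, neg_zero, add_zero,
      zero_add, neg_neg, mul_one, lam_one, smul_eq_mul, smul_neg, neg_smul] at e15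
    have e16 := congrArg (fun x => lam (CL 7 (CL 5 (CL 4 (CL 3 (CL 1 (CL 0 x))))))) h0
    simp (config := { decide := true }) only [map_add, map_sub, map_neg, map_smul, map_zero,
      CL_cons_eq, CL_cons_ne, CL_one, CL_single_eq, CL_single_ne,
      zero_smul, one_smul, smul_zero, mul_zero, zero_mul, sub_zero, zero_sub, neg_zero, add_zero,
      zero_add, neg_neg, mul_one, lam_one, smul_eq_mul, smul_neg, neg_smul] at e16
    have e17 := congrArg (fun x => lam (CL 6 (CL 5 (CL 4 (CL 3 (CL 1 (CL 0 x))))))) h0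
    simp (config := { decide := true }) only [map_add, map_sub, map_neg, map_smul, map_zero,
      CL_cons_eq, CL_cons_ne, CL_one, CL_single_eq, CL_single_ne,
      zero_smul, one_smul, smul_zero, mul_zero, zero_mul, sub_zero, zero_sub, neg_zero, add_zero,
      zero_add, neg_neg, mul_one, lam_one, smul_eq_mul, smul_neg, neg_smul] at e17
    have e18 := congrArg (fun x => lam (CL 7 (CL 6 (CL 5 (CL 2 (CL 1 (CL 0 x))))))) h0
    simp (config := { decide := true }) only [map_add, map_sub, map_neg, map_smul, map_zero,
      CL_cons_eq, CL_cons_ne, CL_one, CL_single_eq, CL_single_ne,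
      zero_smul, one_smul, smul_zero, mul_zero, zero_mul, sub_zero, zero_sub, neg_zero, add_zero,
      zero_add, neg_neg, mul_one, lam_one, smul_eq_mul, smul_neg, neg_smul] at e18
    have e19 := congrArg (fun x => lam (CL 7 (CL 6 (CL 4 (CL 2 (CL 1 (CL 0 x))))))) h0
    simp (config := { decide := true }) only [map_add, map_sub, map_neg, map_smul, map_zero,
      CL_cons_eq, CL_cons_ne, CL_one, CL_single_eq, CL_single_ne,
      zero_smul, one_smul, smul_zero, mul_zero, zero_mul, sub_zero, zero_sub, neg_zero, add_zero,
      zero_add, neg_neg, mul_one, lam_one, smul_eq_mul, smul_neg, neg_smul] at e19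
    have e20 := congrArg (fun x => lam (CL 7 (CL 5 (CL 4 (CL 2 (CL 1 (CL 0 x))))))) h0
    simp (config := { decide := true }) only [map_add, map_sub, map_neg, map_smul, map_zero,
      CL_cons_eq, CL_cons_ne, CL_one, CL_single_eq, CL_single_ne,
      zero_smul, one_smul, smul_zero, mul_zero, zero_mul, sub_zero, zero_sub, neg_zero, add_zero,
      zero_add, neg_neg, mul_one, lam_one, smul_eq_mul, smul_neg, neg_smul] at e20
    have e21 := congrArg (fun x => lam (CL 6 (CL 5 (CL 4 (CL 2 (CL 1 (CL 0 x))))))) h0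
    simp (config := { decide := true }) only [map_add, map_sub, map_neg, map_smul, map_zero,
      CL_cons_eq, CL_cons_ne, CL_one, CL_single_eq, CL_single_ne,
      zero_smul, one_smul, smul_zero, mul_zero, zero_mul, sub_zero, zero_sub, neg_zero, add_zero,
      zero_add, neg_neg, mul_one, lam_one, smul_eq_mul, smul_neg, neg_smul] at e21
    have q0 : F 0 1 + F 3 2 = 0 := by have := hF 3 2; linarith [e0]
    have q1 : F 0 2 + F 1 3 = 0 := by have := hF 1 3; linarith [e1]
    have q2 : F 0 3 + F 2 1 = 0 := by have := hF 2 1; linarith [e2]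
    have q3 : F 4 5 + F 7 6 = 0 := by have := hF 7 6; linarith [e3]
    have q4 : F 4 6 + F 5 7 = 0 := by have := hF 5 7; linarith [e4]
    have q5 : F 4 7 + F 6 5 = 0 := by have := hF 6 5; linarith [e5]
    have z04 : F 0 4 = 0 := by linarith [e6]
    have z05 : F 0 5 = 0 := by linarith [e7]
    have z06 : F 0 6 = 0 := by linarith [e8]
    have z07 : F 0 7 = 0 := by linarith [e9]
    have z14 : F 1 4 = 0 := by linarith [e10]
    have z15 : F 1 5 = 0 := by linarith [e11]
    have z16 : F 1 6 = 0 := by linarith [e12]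
    have z17 : F 1 7 = 0 := by linarith [e13]
    have z24 : F 2 4 = 0 := by linarith [e14]
    have z25 : F 2 5 = 0 := by linarith [e15]
    have z26 : F 2 6 = 0 := by linarith [e16]
    have z27 : F 2 7 = 0 := by linarith [e17]
    have z34 : F 3 4 = 0 := by linarith [e18]
    have z35 : F 3 5 = 0 := by linarith [e19]
    have z36 : F 3 6 = 0 := by linarith [e20]
    have z37 : F 3 7 = 0 := by linarith [e21]
    refine ⟨q0, q1, q2, q3, q4, q5, ?_⟩
    intro a b ha hb
    fin_cases a <;> fin_cases b <;>
      first | exact absurd ha (by decide) | exact absurd hb (by decide) | exact z04 | exact z05 | exact z06 | exact z07 | exact z14 | exact z15 | exact z16 | exact z17 | exact z24 | exact z25 | exact z26 | exact z27 | exact z34 | exact z35 | exact z36 | exact z37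
  · intro h
    obtain ⟨h1, h2, h3, h4, h5, h6, hz⟩ := h
    have e23 : F 2 3 = F 0 1 := by have := hF 2 3; linarith
    have e13 : F 1 3 = -F 0 2 := by linarith
    have e12 : F 1 2 = F 0 3 := by have := hF 1 2; linarith
    have e67 : F 6 7 = F 4 5 := by have := hF 6 7; linarith
    have e57 : F 5 7 = -F 4 6 := by linarith
    have e56 : F 5 6 = F 4 7 := by have := hF 5 6; linarith
    have w04 : F 0 4 = 0 := hz 0 4 (by decide) (by decide)
    have w05 : F 0 5 = 0 := hz 0 5 (by decide) (by decide)
    have w06 : F 0 6 = 0 := hz 0 6 (by decide) (by decide)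
    have w07 : F 0 7 = 0 := hz 0 7 (by decide) (by decide)
    have w14 : F 1 4 = 0 := hz 1 4 (by decide) (by decide)
    have w15 : F 1 5 = 0 := hz 1 5 (by decide) (by decide)
    have w16 : F 1 6 = 0 := hz 1 6 (by decide) (by decide)
    have w17 : F 1 7 = 0 := hz 1 7 (by decide) (by decide)
    have w24 : F 2 4 = 0 := hz 2 4 (by decide) (by decide)
    have w25 : F 2 5 = 0 := hz 2 5 (by decide) (by decide)
    have w26 : F 2 6 = 0 := hz 2 6 (by decide) (by decide)
    have w27 : F 2 7 = 0 := hz 2 7 (by decide) (by decide)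
    have w34 : F 3 4 = 0 := hz 3 4 (by decide) (by decide)
    have w35 : F 3 5 = 0 := hz 3 5 (by decide) (by decide)
    have w36 : F 3 6 = 0 := hz 3 6 (by decide) (by decide)
    have w37 : F 3 7 = 0 := hz 3 7 (by decide) (by decide)
    rw [NF8 F hF]
    simp only [e23, e13, e12, e67, e57, e56, w04, w05, w06, w07, w14, w15, w16, w17, w24, w25, w26, w27, w34, w35, w36, w37, zero_div, neg_zero, zero_smul,
      add_zero, zero_add]
    module
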